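/- Under the hypotheses of the combinatorial lemma (abelian Σ, injections π_i : H₁ → Σ in direct sum position, injections π_{ij} : H₂ → Σ with H₁ × H₁ ⊂ H₂, homomorphisms ψ_i : Σ → L and ψ : H₂ → L with ψ_i ∘ π_{ij} = ψ = −ψ_j ∘ π_{ij}, ψ_k ∘ π_{ij} = 0 for k ∉ {i,j}, ⋂ ker ψ_i = ⟨π_i(H₁)⟩, and a Perm(ℕ)-action with γ_β ∘ π_{ij} = π_{β(i),β(j)}), define ρ : H₂ → H₁ so that π₁₂(x) + π₂₃(x) + π₃₁(x) = π₁(ρ(x)) + π₂(ρ(x)) + π₃(ρ(x)), and H := ker ρ. Then for all x ∈ H and all distinct i,j,k ∈ ℕ: π_{ij}(x) + π_{jk}(x) = π_{ik}(x). -/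

import Mathlib

/-- Auxiliary: any distinct triple of naturals can be mapped to any other distinct triple
by a permutation of `ℕ`. -/
theorem exists_perm_three {i j k i' j' k' : ℕ} (hij : i ≠ j) (hjk : j ≠ k) (hik : i ≠ k)
    (hij' : i' ≠ j') (hjk' : j' ≠ k') (hik' : i' ≠ k') :
    ∃ β : Equiv.Perm ℕ, β i = i' ∧ β j = j' ∧ β k = k' := by
  set p := i + j + k + i' + j' + k' + 1 with hp
  set q := i + j + k + i' + j' + k' + 2 with hq
  set r := i + j + k + i' + j' + k' + 3 with hr
  refine ⟨(Equiv.swap p i' * (Equiv.swap q j' * Equiv.swap r k')) *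
          (Equiv.swap i p * (Equiv.swap j q * Equiv.swap k r)), ?_, ?_, ?_⟩ <;>
    simp only [Equiv.Perm.mul_apply]
  · rw [Equiv.swap_apply_of_ne_of_ne (by omega : i ≠ k) (by omega : i ≠ r),
      Equiv.swap_apply_of_ne_of_ne (by omega : i ≠ j) (by omega : i ≠ q),
      Equiv.swap_apply_left,
      Equiv.swap_apply_of_ne_of_ne (by omega : p ≠ r) (by omega : p ≠ k'),
      Equiv.swap_apply_of_ne_of_ne (by omega : p ≠ q) (by omega : p ≠ j'),
      Equiv.swap_apply_left]
  · rw [Equiv.swap_apply_of_ne_of_ne (by omega : j ≠ k) (by omega : j ≠ r),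
      Equiv.swap_apply_left,
      Equiv.swap_apply_of_ne_of_ne (by omega : q ≠ i) (by omega : q ≠ p),
      Equiv.swap_apply_of_ne_of_ne (by omega : q ≠ r) (by omega : q ≠ k'),
      Equiv.swap_apply_left,
      Equiv.swap_apply_of_ne_of_ne (by omega : j' ≠ p) (by omega : j' ≠ i')]
  · rw [Equiv.swap_apply_left,
      Equiv.swap_apply_of_ne_of_ne (by omega : r ≠ j) (by omega : r ≠ q),
      Equiv.swap_apply_of_ne_of_ne (by omega : r ≠ i) (by omega : r ≠ p),
      Equiv.swap_apply_left,
      Equiv.swap_apply_of_ne_of_ne (by omega : k' ≠ q) (by omega : k' ≠ j'),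
      Equiv.swap_apply_of_ne_of_ne (by omega : k' ≠ p) (by omega : k' ≠ i')]

/-- under the hypotheses of the combinatorial lemma with `I = ℕ`, let
`ρ : H₂ → H₁` be the homomorphism satisfying
`π₁₂(x) + π₂₃(x) + π₃₁(x) = π₁(ρ x) + π₂(ρ x) + π₃(ρ x)` and set `H := ker ρ`. Then for
every `x ∈ H` and all distinct `i, j, k`: `π_{ij}(x) + π_{jk}(x) = π_{ik}(x)`. -/
theorem stmt_13 {Sg H₁ H₂ L : Type*}
    [AddCommGroup Sg] [Countable Sg] [AddCommGroup H₁] [AddCommGroup H₂] [AddCommGroup L]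
    (ι : H₁ × H₁ →+ H₂) (hι : Function.Injective ι)
    (π : ℕ → H₁ →+ Sg) (hπinj : ∀ i, Function.Injective (π i))
    (π₂ : ℕ → ℕ → H₂ →+ Sg) (hπ₂inj : ∀ i j, i ≠ j → Function.Injective (π₂ i j))
    (ψi : ℕ → Sg →+ L) (ψ : H₂ →+ L)
    (γ : Equiv.Perm ℕ →* Multiplicative (AddAut Sg))
    (hgen : AddSubgroup.closure
      (⋃ (i : ℕ) (j : ℕ) (_ : i ≠ j), Set.range (π₂ i j)) = ⊤)
    (hdirect : Function.Injective fun x : ℕ →₀ H₁ => x.sum fun i a => π i a)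
    (hcompat : ∀ i j, i ≠ j → ∀ a b : H₁, π₂ i j (ι (a, b)) = π i a + π j b)
    (hψ₁ : ∀ i j, i ≠ j → ∀ x : H₂, ψi i (π₂ i j x) = ψ x)
    (hψ₂ : ∀ i j, i ≠ j → ∀ x : H₂, ψi j (π₂ i j x) = - ψ x)
    (hψ₃ : ∀ i j k, i ≠ j → k ≠ i → k ≠ j → ∀ x : H₂, ψi k (π₂ i j x) = 0)
    (hker : AddSubgroup.closure (⋃ i : ℕ, Set.range (π i)) = ⨅ i : ℕ, (ψi i).ker)
    (hequiv₁ : ∀ (β : Equiv.Perm ℕ) (i : ℕ) (a : H₁), Multiplicative.toAdd (γ β) (π i a) = π (β i) a)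
    (hequiv₂ : ∀ (β : Equiv.Perm ℕ) (i j : ℕ), i ≠ j → ∀ x : H₂,
      Multiplicative.toAdd (γ β) (π₂ i j x) = π₂ (β i) (β j) x)
    (ρ : H₂ →+ H₁)
    (hρ : ∀ x : H₂, π₂ 1 2 x + π₂ 2 3 x + π₂ 3 1 x
      = π 1 (ρ x) + π 2 (ρ x) + π 3 (ρ x)) :
    ∀ x : H₂, ρ x = 0 → ∀ i j k : ℕ, i ≠ j → j ≠ k → i ≠ k →
      π₂ i j x + π₂ j k x = π₂ i k x := by
  intro x hx i j k hij hjk hik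
  classical
  set Φ : (ℕ →₀ H₁) →+ Sg := Finsupp.liftAddHom π with hΦdef
  have hΦ : ∀ f : ℕ →₀ H₁, Φ f = f.sum fun m a => π m a := fun f => rfl
  have hΦinj : Function.Injective Φ := hdirect
  set Y : ℕ → ℕ → ℕ → Sg := fun a b c => π₂ a b x + π₂ b c x - π₂ a c x with hY
  -- transport of Y along permutations
  have hYtrans : ∀ (β : Equiv.Perm ℕ) (a b c : ℕ), a ≠ b → b ≠ c → a ≠ c →
      Multiplicative.toAdd (γ β) (Y a b c) = Y (β a) (β b) (β c) := by
    intro β a b c hab hbc hac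
    simp only [hY, map_sub, map_add, hequiv₂ β _ _ hab, hequiv₂ β _ _ hbc,
      hequiv₂ β _ _ hac]
  -- Y is killed by every ψi
  have hYker : ∀ a b c : ℕ, a ≠ b → b ≠ c → a ≠ c → ∀ m, ψi m (Y a b c) = 0 := by
    intro a b c hab hbc hac m
    simp only [hY, map_sub, map_add]
    rcases eq_or_ne m a with rfl | hma
    · rw [hψ₁ _ _ hab, hψ₃ _ _ _ hbc hab hac, hψ₁ _ _ hac]; abel
    rcases eq_or_ne m b with rfl | hmb
    · rw [hψ₂ _ _ hab, hψ₁ _ _ hbc, hψ₃ _ _ _ hac hma hbc]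
      abel
    rcases eq_or_ne m c with rfl | hmc
    · rw [hψ₃ _ _ _ hab hac.symm hbc.symm, hψ₂ _ _ hbc, hψ₂ _ _ hac]; abel
    · rw [hψ₃ _ _ _ hab hma hmb, hψ₃ _ _ _ hbc hmb hmc, hψ₃ _ _ _ hac hma hmc]
      abel
  -- hence Y lies in the subgroup generated by the π m
  have hYmem : ∀ a b c : ℕ, a ≠ b → b ≠ c → a ≠ c →
      ∃ f : ℕ →₀ H₁, Φ f = Y a b c := by
    intro a b c hab hbc hac
    have h1 : Y a b c ∈ ⨅ m : ℕ, (ψi m).ker := by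
      rw [AddSubgroup.mem_iInf]
      intro m
      exact hYker a b c hab hbc hac m
    rw [← hker] at h1
    have h2 : AddSubgroup.closure (⋃ m : ℕ, Set.range (π m)) ≤ Φ.range := by
      rw [AddSubgroup.closure_le]
      rintro s hs
      simp only [Set.mem_iUnion, Set.mem_range] at hs
      obtain ⟨m, a', rfl⟩ := hs
      exact ⟨Finsupp.single m a', Finsupp.liftAddHom_apply_single π m a'⟩
    exact h2 h1
  obtain ⟨f, hf⟩ := hYmem 1 2 3 (by norm_num) (by norm_num) (by norm_num)
  -- f is supported on {1,2,3}
  have hsupp : ∀ m : ℕ, m ∉ ({1, 2, 3} : Finset ℕ) → f m = 0 := by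
    intro m hm
    simp only [Finset.mem_insert, Finset.mem_singleton, not_or] at hm
    obtain ⟨hm1, hm2, hm3⟩ := hm
    obtain ⟨m', hm'⟩ := Infinite.exists_notMem_finset
      (insert m (insert 1 (insert 2 ({3} : Finset ℕ))) ∪ f.support)
    simp only [Finset.mem_union, Finset.mem_insert, Finset.mem_singleton, not_or] at hm'
    obtain ⟨⟨hmm', h1', h2', h3'⟩, hsup'⟩ := hm'
    set β := Equiv.swap m m' with hβ
    have hβ1 : β 1 = 1 := Equiv.swap_apply_of_ne_of_ne (Ne.symm hm1) (Ne.symm h1')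
    have hβ2 : β 2 = 2 := Equiv.swap_apply_of_ne_of_ne (Ne.symm hm2) (Ne.symm h2')
    have hβ3 : β 3 = 3 := Equiv.swap_apply_of_ne_of_ne (Ne.symm hm3) (Ne.symm h3')
    have h1 : Multiplicative.toAdd (γ β) (Y 1 2 3) = Y 1 2 3 := by
      rw [hYtrans β 1 2 3 (by norm_num) (by norm_num) (by norm_num), hβ1, hβ2, hβ3]
    have h2 : Multiplicative.toAdd (γ β) (Φ f) = Φ (Finsupp.equivMapDomain β f) := by
      rw [hΦ, hΦ, Finsupp.sum_equivMapDomain, map_finsuppSum]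
      exact Finsupp.sum_congr fun n _ => hequiv₁ β n (f n)
    have h3 : Finsupp.equivMapDomain β f = f := by
      apply hΦinj
      rw [← h2, hf, h1]
    have h4 : f m' = f m := by
      have := DFunLike.congr_fun h3 m
      rwa [Finsupp.equivMapDomain_apply, Equiv.symm_swap, Equiv.swap_apply_left] at this
    rw [← h4]
    exact Finsupp.notMem_support_iff.mp (fun h => hsup' h)
  -- explicit form of Y 1 2 3
  have hf123 : Y 1 2 3 = π 1 (f 1) + π 2 (f 2) + π 3 (f 3) := by
    rw [← hf, hΦ,
      Finsupp.sum_of_support_subset f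
        (fun n hn => by
          by_contra hcon
          exact Finsupp.mem_support_iff.mp hn (hsupp n hcon))
        _ (fun n _ => map_zero (π n)),
      show ({1, 2, 3} : Finset ℕ) = insert 1 (insert 2 {3}) from rfl,
      Finset.sum_insert (by decide), Finset.sum_insert (by decide),
      Finset.sum_singleton]
    abel
  set a := f 1
  set b := f 2
  set c := f 3
  -- universality
  have hYabc : ∀ a' b' c' : ℕ, a' ≠ b' → b' ≠ c' → a' ≠ c' →
      Y a' b' c' = π a' a + π b' b + π c' c := by
    intro a' b' c' hab hbc hac
    obtain ⟨β, h1, h2, h3⟩ := exists_perm_three (show (1:ℕ) ≠ 2 by norm_num)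
      (show (2:ℕ) ≠ 3 by norm_num) (show (1:ℕ) ≠ 3 by norm_num) hab hbc hac
    have ht := hYtrans β 1 2 3 (by norm_num) (by norm_num) (by norm_num)
    rw [h1, h2, h3] at ht
    rw [← ht, hf123, map_add, map_add, hequiv₁, hequiv₁, hequiv₁, h1, h2, h3]
  -- 4-index identity kills a and c
  have hquad : Y 1 2 3 + Y 1 3 4 = Y 1 2 4 + Y 2 3 4 := by
    simp only [hY]; abel
  rw [hYabc 1 2 3 (by norm_num) (by norm_num) (by norm_num),
    hYabc 1 3 4 (by norm_num) (by norm_num) (by norm_num),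
    hYabc 1 2 4 (by norm_num) (by norm_num) (by norm_num),
    hYabc 2 3 4 (by norm_num) (by norm_num) (by norm_num)] at hquad
  have key : π 1 a + π 3 c = π 2 a + π 4 c := by
    have hdiff : (π 1 a + π 3 c) - (π 2 a + π 4 c)
        = ((π 1 a + π 2 b + π 3 c) + (π 1 a + π 3 b + π 4 c))
          - ((π 1 a + π 2 b + π 4 c) + (π 2 a + π 3 b + π 4 c)) := by abel
    rw [hquad, sub_self] at hdiff
    exact sub_eq_zero.mp hdiff
  have hfin : (Finsupp.single 1 a + Finsupp.single 3 c : ℕ →₀ H₁)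
      = Finsupp.single 2 a + Finsupp.single 4 c := by
    apply hΦinj
    rw [map_add, map_add, Finsupp.liftAddHom_apply_single,
      Finsupp.liftAddHom_apply_single, Finsupp.liftAddHom_apply_single,
      Finsupp.liftAddHom_apply_single]
    exact key
  have ha0 : a = 0 := by
    have := DFunLike.congr_fun hfin 1
    simpa [Finsupp.single_apply] using this
  have hc0 : c = 0 := by
    have := DFunLike.congr_fun hfin 3
    simpa [Finsupp.single_apply] using this
  -- ρ x = 0 cyclic relation kills b
  have hY123 : Y 1 2 3 = π 2 b := by
    rw [hf123]
    show π 1 a + π 2 b + π 3 c = π 2 b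
    rw [ha0, hc0, map_zero, map_zero]
    abel
  have hcyc : π₂ 1 2 x + π₂ 2 3 x + π₂ 3 1 x = 0 := by
    rw [hρ x, hx]
    simp
  have hw : π₂ 3 1 x + π₂ 1 3 x = - π 2 b := by
    have h5 : π₂ 3 1 x + π₂ 1 3 x
        = (π₂ 1 2 x + π₂ 2 3 x + π₂ 3 1 x) - Y 1 2 3 := by
      simp only [hY]; abel
    rw [hcyc, hY123, zero_sub] at h5
    exact h5
  have hb0 : b = 0 := by
    have hinv : Multiplicative.toAdd (γ (Equiv.swap 2 4)) (π₂ 3 1 x + π₂ 1 3 x) = π₂ 3 1 x + π₂ 1 3 x := by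
      rw [map_add, hequiv₂ _ 3 1 (by norm_num), hequiv₂ _ 1 3 (by norm_num),
        Equiv.swap_apply_of_ne_of_ne (by norm_num : (3:ℕ) ≠ 2) (by norm_num : (3:ℕ) ≠ 4),
        Equiv.swap_apply_of_ne_of_ne (by norm_num : (1:ℕ) ≠ 2) (by norm_num : (1:ℕ) ≠ 4)]
    rw [hw, map_neg, hequiv₁, Equiv.swap_apply_left] at hinv
    have hkey2 : π 2 b = π 4 b := (neg_inj.mp hinv).symm
    have hfin2 : (Finsupp.single 2 b : ℕ →₀ H₁) = Finsupp.single 4 b := by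
      apply hΦinj
      rw [Finsupp.liftAddHom_apply_single, Finsupp.liftAddHom_apply_single]
      exact hkey2
    have := DFunLike.congr_fun hfin2 2
    simpa [Finsupp.single_apply] using this
  -- conclude
  have hY0 : Y i j k = 0 := by
    rw [hYabc i j k hij hjk hik, ha0, hb0, hc0, map_zero, map_zero, map_zero]
    abel
  have : π₂ i j x + π₂ j k x - π₂ i k x = 0 := hY0
  exact sub_eq_zero.mp this
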